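/- If G ≤ Sym(Γ) and H ≤ Sym(Δ) are transitive and pre-primitive, and |Γ| and |Δ| are coprime, then the direct product G×H in its coordinatewise product action on Γ×Δ is pre-primitive. -/

import Mathlib

open Equiv

variable {Ω : Type*}

/-- `G` is a transitive permutation group on `Ω`. -/
def IsTransitive (G : Subgroup (Perm Ω)) : Prop :=
  ∀ x y : Ω, ∃ g ∈ G, g x = y

/-- The partition (setoid) `r` of `Ω` is `G`-invariant. -/
def IsInvariantPartition (G : Subgroup (Perm Ω)) (r : Setoid Ω) : Prop :=
  ∀ g ∈ G, ∀ x y : Ω, r.r x y → r.r (g x) (g y)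

/-- The partition `r` of `Ω` is the orbit partition of the permutation group `H`. -/
def IsOrbitPartition (H : Subgroup (Perm Ω)) (r : Setoid Ω) : Prop :=
  ∀ x y : Ω, r.r x y ↔ ∃ h ∈ H, h x = y

/-- `G` is pre-primitive: every `G`-invariant partition is the orbit partition
of a subgroup of `G`. -/
def IsPrePrimitive (G : Subgroup (Perm Ω)) : Prop :=
  ∀ r : Setoid Ω, IsInvariantPartition G r → ∃ H ≤ G, IsOrbitPartition H r

/-- `N` is a normal subgroup of the permutation group `G`. -/
def IsNormalIn (N G : Subgroup (Perm Ω)) : Prop :=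
  N ≤ G ∧ ∀ g ∈ G, ∀ n ∈ N, g * n * g⁻¹ ∈ N


/-- The coordinatewise (product) action homomorphism. -/
def prodPermHom (Γ Δ : Type*) : Perm Γ × Perm Δ →* Perm (Γ × Δ) where
  toFun p := Equiv.prodCongr p.1 p.2
  map_one' := by ext ⟨a, b⟩ <;> rfl
  map_mul' p q := by ext ⟨a, b⟩ <;> rfl

/-- The direct product `G × H` in its coordinatewise product action on `Γ × Δ`,
as a subgroup of `Perm (Γ × Δ)`. -/
def productAction {Γ Δ : Type*} (G : Subgroup (Perm Γ)) (H : Subgroup (Perm Δ)) :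
    Subgroup (Perm (Γ × Δ)) :=
  (G.prod H).map (prodPermHom Γ Δ)

/-! ### Auxiliary material -/

section FiberCard

variable {M N : Type*} [Group M] [Group N]

/-- The "first fiber" `{m | (m,1) ∈ L}` of a subgroup of a product. -/
def fiberFst (L : Subgroup (M × N)) : Subgroup M where
  carrier := {m | (m, (1 : N)) ∈ L}
  one_mem' := L.one_mem
  mul_mem' {x y} hx hy := by simpa using L.mul_mem hx hy
  inv_mem' {x} hx := by simpa using L.inv_mem hx

/-- The "second fiber" `{n | (1,n) ∈ L}` of a subgroup of a product. -/
def fiberSnd (L : Subgroup (M × N)) : Subgroup N where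
  carrier := {n | ((1 : M), n) ∈ L}
  one_mem' := L.one_mem
  mul_mem' {x y} hx hy := by simpa using L.mul_mem hx hy
  inv_mem' {x} hx := by simpa using L.inv_mem hx

theorem mem_fiberFst {L : Subgroup (M × N)} {m : M} : m ∈ fiberFst L ↔ (m, (1 : N)) ∈ L :=
  Iff.rfl

theorem mem_fiberSnd {L : Subgroup (M × N)} {n : N} : n ∈ fiberSnd L ↔ ((1 : M), n) ∈ L :=
  Iff.rfl

theorem card_eq_fst (L : Subgroup (M × N)) :
    Nat.card L = Nat.card (L.map (MonoidHom.fst M N)) * Nat.card (fiberSnd L) := by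
  classical
  set f := (MonoidHom.fst M N).comp L.subtype with hf
  have hrange : f.range = L.map (MonoidHom.fst M N) := by
    ext m
    constructor
    · rintro ⟨⟨p, hp⟩, rfl⟩
      exact ⟨p, hp, rfl⟩
    · rintro ⟨p, hp, rfl⟩
      exact ⟨⟨p, hp⟩, rfl⟩
  have hker : Nat.card f.ker = Nat.card (fiberSnd L) := by
    refine Nat.card_congr ?_
    refine ⟨fun x => ⟨x.val.val.2, ?_⟩, fun y => ⟨⟨((1 : M), y.val), y.2⟩, ?_⟩, ?_, ?_⟩
    · have h1 : (x.val.val).1 = 1 := x.2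
      have : ((1 : M), x.val.val.2) = x.val.val := Prod.ext h1.symm rfl
      rw [mem_fiberSnd, this]
      exact x.val.2
    · show f _ = 1
      rfl
    · intro x
      have h1 : (x.val.val).1 = 1 := x.2
      apply Subtype.ext
      apply Subtype.ext
      exact Prod.ext h1.symm rfl
    · intro y
      rfl
  have hq : Nat.card (↥L ⧸ f.ker) = Nat.card f.range :=
    Nat.card_congr (QuotientGroup.quotientKerEquivRange f).toEquiv
  rw [Subgroup.card_eq_card_quotient_mul_card_subgroup f.ker, hker, hq, hrange]

theorem card_eq_snd (L : Subgroup (M × N)) :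
    Nat.card L = Nat.card (L.map (MonoidHom.snd M N)) * Nat.card (fiberFst L) := by
  classical
  set f := (MonoidHom.snd M N).comp L.subtype with hf
  have hrange : f.range = L.map (MonoidHom.snd M N) := by
    ext m
    constructor
    · rintro ⟨⟨p, hp⟩, rfl⟩
      exact ⟨p, hp, rfl⟩
    · rintro ⟨p, hp, rfl⟩
      exact ⟨⟨p, hp⟩, rfl⟩
  have hker : Nat.card f.ker = Nat.card (fiberFst L) := by
    refine Nat.card_congr ?_
    refine ⟨fun x => ⟨x.val.val.1, ?_⟩, fun y => ⟨⟨(y.val, (1 : N)), y.2⟩, ?_⟩, ?_, ?_⟩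
    · have h1 : (x.val.val).2 = 1 := x.2
      have : (x.val.val.1, (1 : N)) = x.val.val := Prod.ext rfl h1.symm
      rw [mem_fiberFst, this]
      exact x.val.2
    · show f _ = 1
      rfl
    · intro x
      have h1 : (x.val.val).2 = 1 := x.2
      apply Subtype.ext
      apply Subtype.ext
      exact Prod.ext rfl h1.symm
    · intro y
      rfl
  have hq : Nat.card (↥L ⧸ f.ker) = Nat.card f.range :=
    Nat.card_congr (QuotientGroup.quotientKerEquivRange f).toEquiv
  rw [Subgroup.card_eq_card_quotient_mul_card_subgroup f.ker, hker, hq, hrange]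

end FiberCard

section PermAux

variable {Γ Δ : Type*}

/-- The stabilizer of `a` inside `G`, as a subgroup of `Perm Γ`. -/
def stabSub (G : Subgroup (Perm Γ)) (a : Γ) : Subgroup (Perm Γ) where
  carrier := {g | g ∈ G ∧ g a = a}
  one_mem' := ⟨G.one_mem, rfl⟩
  mul_mem' {x y} hx hy := ⟨G.mul_mem hx.1 hy.1, by
    simp only [Equiv.Perm.mul_apply, hy.2, hx.2]⟩
  inv_mem' {x} hx := ⟨G.inv_mem hx.1, by
    conv_lhs => rw [← hx.2]
    simp⟩

theorem card_of_transitive {Γ : Type*} [Fintype Γ] (G : Subgroup (Perm Γ))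
    (hG : IsTransitive G) (a : Γ) :
    Nat.card G = Fintype.card Γ * Nat.card (stabSub G a) := by
  classical
  have e := MulAction.orbitProdStabilizerEquivGroup (↥G) a
  have h1 : Nat.card (MulAction.orbit (↥G) a) = Fintype.card Γ := by
    have huniv : MulAction.orbit (↥G) a = Set.univ := by
      ext y
      simp only [Set.mem_univ, iff_true, MulAction.mem_orbit_iff]
      obtain ⟨g, hg, hga⟩ := hG a y
      exact ⟨⟨g, hg⟩, hga⟩
    rw [huniv]
    rw [Nat.card_congr (Equiv.Set.univ Γ), Nat.card_eq_fintype_card]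
  have h2 : Nat.card (MulAction.stabilizer (↥G) a) = Nat.card (stabSub G a) := by
    refine Nat.card_congr ⟨fun x => ⟨x.val.val, x.val.2, x.2⟩,
      fun y => ⟨⟨y.val, y.2.1⟩, y.2.2⟩, fun x => ?_, fun y => rfl⟩
    apply Subtype.ext
    rfl
  calc Nat.card ↥G
      = Nat.card (MulAction.orbit (↥G) a × MulAction.stabilizer (↥G) a) :=
        (Nat.card_congr e).symm
    _ = Fintype.card Γ * Nat.card (stabSub G a) := by rw [Nat.card_prod, h1, h2]

/-- Coordinatewise invariance of an invariant partition of the product action. -/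
theorem inv2 {G : Subgroup (Perm Γ)} {H : Subgroup (Perm Δ)} {r : Setoid (Γ × Δ)}
    (hr : IsInvariantPartition (productAction G H) r)
    {g : Perm Γ} (hg : g ∈ G) {h : Perm Δ} (hh : h ∈ H) {x x' : Γ} {d d' : Δ}
    (hxy : r.r (x, d) (x', d')) : r.r (g x, h d) (g x', h d') := by
  have hmem : prodPermHom Γ Δ (g, h) ∈ productAction G H :=
    Subgroup.mem_map.mpr ⟨(g, h), Subgroup.mem_prod.mpr ⟨hg, hh⟩, rfl⟩
  exact hr _ hmem (x, d) (x', d') hxy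

/-- The key subgroup `L` of pairs moving the base point within its class. -/
def Lsub (G : Subgroup (Perm Γ)) (H : Subgroup (Perm Δ)) (r : Setoid (Γ × Δ))
    (hr : IsInvariantPartition (productAction G H) r) (a : Γ) (b : Δ) :
    Subgroup (Perm Γ × Perm Δ) where
  carrier := {p | p.1 ∈ G ∧ p.2 ∈ H ∧ r.r (a, b) (p.1 a, p.2 b)}
  one_mem' := ⟨G.one_mem, H.one_mem, r.iseqv.refl (a, b)⟩
  mul_mem' {p q} hp hq := by
    refine ⟨G.mul_mem hp.1 hq.1, H.mul_mem hp.2.1 hq.2.1, ?_⟩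
    have h1 := inv2 hr hp.1 hp.2.1 hq.2.2
    exact r.iseqv.trans hp.2.2 h1
  inv_mem' {p} hp := by
    refine ⟨G.inv_mem hp.1, H.inv_mem hp.2.1, ?_⟩
    have h1 := inv2 hr (G.inv_mem hp.1) (H.inv_mem hp.2.1) hp.2.2
    simp only [Equiv.Perm.inv_def, Equiv.symm_apply_apply] at h1
    exact r.iseqv.symm h1

/-- The key splitting lemma: if `(a,b)` is related to `(x,d)` then it is related to
`(x,b)` and to `(a,d)`.  Uses coprimality of the degrees. -/
theorem key_split {Γ Δ : Type*} [Fintype Γ] [Fintype Δ]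
    (G : Subgroup (Perm Γ)) (H : Subgroup (Perm Δ))
    (hG : IsTransitive G) (hH : IsTransitive H)
    (hcop : Nat.Coprime (Fintype.card Γ) (Fintype.card Δ))
    (r : Setoid (Γ × Δ)) (hr : IsInvariantPartition (productAction G H) r)
    (a : Γ) (b : Δ) (x : Γ) (d : Δ) (hxd : r.r (a, b) (x, d)) :
    r.r (a, b) (x, b) ∧ r.r (a, b) (a, d) := by
  classical
  set L := Lsub G H r hr a b with hL
  set L₁ := L.map (MonoidHom.fst (Perm Γ) (Perm Δ)) with hL1
  set L₂ := L.map (MonoidHom.snd (Perm Γ) (Perm Δ)) with hL2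
  set N₁ := fiberFst L with hN1
  set N₂ := fiberSnd L with hN2
  have hN1L1 : N₁ ≤ L₁ := fun g hg => ⟨(g, 1), hg, rfl⟩
  have hN2L2 : N₂ ≤ L₂ := fun h hh => ⟨(1, h), hh, rfl⟩
  have hSaN1 : stabSub G a ≤ N₁ := by
    rintro g ⟨hg, hga⟩
    show ((g, (1 : Perm Δ)) ∈ L)
    refine ⟨hg, H.one_mem, ?_⟩
    show r.r (a, b) (g a, (1 : Perm Δ) b)
    rw [hga]
    exact r.iseqv.refl (a, b)
  have hSbN2 : stabSub H b ≤ N₂ := by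
    rintro h ⟨hh, hhb⟩
    show (((1 : Perm Γ), h) ∈ L)
    refine ⟨G.one_mem, hh, ?_⟩
    show r.r (a, b) ((1 : Perm Γ) a, h b)
    rw [hhb]
    exact r.iseqv.refl (a, b)
  have hL1G : L₁ ≤ G := by
    rintro g ⟨p, hp, rfl⟩
    exact hp.1
  have hL2H : L₂ ≤ H := by
    rintro h ⟨p, hp, rfl⟩
    exact hp.2.1
  -- counting
  obtain ⟨d₁, hd₁⟩ := Subgroup.card_dvd_of_le hN1L1
  obtain ⟨d₂, hd₂⟩ := Subgroup.card_dvd_of_le hN2L2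
  obtain ⟨e₁, he₁⟩ := Subgroup.card_dvd_of_le hSaN1
  obtain ⟨e₂, he₂⟩ := Subgroup.card_dvd_of_le hSbN2
  obtain ⟨f₁, hf₁⟩ := Subgroup.card_dvd_of_le hL1G
  obtain ⟨f₂, hf₂⟩ := Subgroup.card_dvd_of_le hL2H
  have hcardG := card_of_transitive G hG a
  have hcardH := card_of_transitive H hH b
  have hposSa : 0 < Nat.card (stabSub G a) := Nat.card_pos
  have hposSb : 0 < Nat.card (stabSub H b) := Nat.card_pos
  have hposN1 : 0 < Nat.card N₁ := Nat.card_pos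
  have hposN2 : 0 < Nat.card N₂ := Nat.card_pos
  have hd1n : d₁ ∣ Fintype.card Γ := by
    have : Fintype.card Γ * Nat.card (stabSub G a) =
        (e₁ * d₁ * f₁) * Nat.card (stabSub G a) := by
      rw [← hcardG, hf₁, hd₁, he₁]; ring
    have hn : Fintype.card Γ = e₁ * d₁ * f₁ := Nat.eq_of_mul_eq_mul_right hposSa this
    exact ⟨e₁ * f₁, by rw [hn]; ring⟩
  have hd2m : d₂ ∣ Fintype.card Δ := by
    have : Fintype.card Δ * Nat.card (stabSub H b) =
        (e₂ * d₂ * f₂) * Nat.card (stabSub H b) := by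
      rw [← hcardH, hf₂, hd₂, he₂]; ring
    have hm : Fintype.card Δ = e₂ * d₂ * f₂ := Nat.eq_of_mul_eq_mul_right hposSb this
    exact ⟨e₂ * f₂, by rw [hm]; ring⟩
  have hd12 : d₁ = d₂ := by
    have hc1 := card_eq_fst L
    have hc2 := card_eq_snd L
    have : (Nat.card N₁ * Nat.card N₂) * d₁ = (Nat.card N₁ * Nat.card N₂) * d₂ := by
      calc (Nat.card N₁ * Nat.card N₂) * d₁ = (Nat.card N₁ * d₁) * Nat.card N₂ := by ring
        _ = Nat.card L₁ * Nat.card N₂ := by rw [← hd₁]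
        _ = Nat.card L := hc1.symm
        _ = Nat.card L₂ * Nat.card N₁ := hc2
        _ = (Nat.card N₂ * d₂) * Nat.card N₁ := by rw [← hd₂]
        _ = (Nat.card N₁ * Nat.card N₂) * d₂ := by ring
    exact Nat.eq_of_mul_eq_mul_left (Nat.mul_pos hposN1 hposN2) this
  have hd1 : d₁ = 1 := by
    have hgcd : d₁ ∣ Nat.gcd (Fintype.card Γ) (Fintype.card Δ) :=
      Nat.dvd_gcd hd1n (hd12 ▸ hd2m)
    rw [hcop] at hgcd
    exact Nat.dvd_one.mp hgcd
  have hN1eq : N₁ = L₁ := by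
    refine Subgroup.eq_of_le_of_card_ge hN1L1 ?_
    rw [hd₁, hd1, mul_one]
  have hN2eq : N₂ = L₂ := by
    refine Subgroup.eq_of_le_of_card_ge hN2L2 ?_
    rw [hd₂, ← hd12, hd1, mul_one]
  -- conclude
  obtain ⟨g, hg, hga⟩ := hG a x
  obtain ⟨h, hh, hhb⟩ := hH b d
  have hgh : (g, h) ∈ L := ⟨hg, hh, by
    show r.r (a, b) (g a, h b)
    rw [hga, hhb]; exact hxd⟩
  have hg1 : (g, (1 : Perm Δ)) ∈ L := by
    have : g ∈ L₁ := ⟨(g, h), hgh, rfl⟩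
    rw [← hN1eq] at this
    exact this
  have h1h : ((1 : Perm Γ), h) ∈ L := by
    have : h ∈ L₂ := ⟨(g, h), hgh, rfl⟩
    rw [← hN2eq] at this
    exact this
  constructor
  · have := hg1.2.2
    show r.r (a, b) (x, b)
    rw [← hga]
    exact this
  · have := h1h.2.2
    show r.r (a, b) (a, d)
    rw [← hhb]
    exact this

end PermAux

theorem product_of_preprimitive_coprime_degrees
    {Γ Δ : Type*} [Fintype Γ] [Fintype Δ]
    (G : Subgroup (Perm Γ)) (H : Subgroup (Perm Δ))
    (hG : IsTransitive G) (hH : IsTransitive H)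
    (hGpp : IsPrePrimitive G) (hHpp : IsPrePrimitive H)
    (hcop : Nat.Coprime (Fintype.card Γ) (Fintype.card Δ)) :
    IsPrePrimitive (productAction G H) := by
  intro r hr
  rcases isEmpty_or_nonempty (Γ × Δ) with hE | hNE
  · exact ⟨⊥, bot_le, fun x => (hE.false x).elim⟩
  obtain ⟨⟨a, b⟩⟩ := hNE
  set τ : Setoid Γ := ⟨fun x x' => ∀ e, r.r (x, e) (x', e),
    ⟨fun x e => r.iseqv.refl _, fun h e => r.iseqv.symm (h e),
      fun h h' e => r.iseqv.trans (h e) (h' e)⟩⟩ with hτ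
  set σ : Setoid Δ := ⟨fun d d' => ∀ y, r.r (y, d) (y, d'),
    ⟨fun d y => r.iseqv.refl _, fun h y => r.iseqv.symm (h y),
      fun h h' y => r.iseqv.trans (h y) (h' y)⟩⟩ with hσ
  have hτinv : IsInvariantPartition G τ := by
    intro g hg x x' hxx' e
    have := inv2 hr hg H.one_mem (hxx' e)
    simpa using this
  have hσinv : IsInvariantPartition H σ := by
    intro h hh d d' hdd' y
    have := inv2 hr G.one_mem hh (hdd' y)
    simpa using this
  obtain ⟨A, hAG, hAorb⟩ := hGpp τ hτinv
  obtain ⟨B, hBH, hBorb⟩ := hHpp σ hσinv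
  refine ⟨productAction A B, Subgroup.map_mono (Subgroup.prod_mono hAG hBH), ?_⟩
  rintro ⟨x, d⟩ ⟨x', d'⟩
  constructor
  · intro hpq
    obtain ⟨g, hg, hga⟩ := hG a x
    obtain ⟨h, hh, hhb⟩ := hH b d
    have h0 : r.r (a, b) (g⁻¹ x', h⁻¹ d') := by
      have h1 := inv2 hr (G.inv_mem hg) (H.inv_mem hh) hpq
      have h2 : g⁻¹ x = a := by rw [← hga]; simp
      have h3 : h⁻¹ d = b := by rw [← hhb]; simp
      rw [h2, h3] at h1
      exact h1
    obtain ⟨k1, k2⟩ := key_split G H hG hH hcop r hr a b _ _ h0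
    have hτxx' : ∀ e, r.r (x, e) (x', e) := by
      intro e
      obtain ⟨h', hh', hh'b⟩ := hH b e
      have := inv2 hr hg hh' k1
      rw [hga, hh'b] at this
      have h4 : g (g⁻¹ x') = x' := by simp
      rw [h4] at this
      exact this
    have hσdd' : ∀ y, r.r (y, d) (y, d') := by
      intro y
      obtain ⟨g', hg', hg'a⟩ := hG a y
      have := inv2 hr hg' hh k2
      rw [hg'a, hhb] at this
      have h4 : h (h⁻¹ d') = d' := by simp
      rw [h4] at this
      exact this
    obtain ⟨p₁, hp₁, hpx⟩ := (hAorb x x').mp hτxx'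
    obtain ⟨p₂, hp₂, hpd⟩ := (hBorb d d').mp hσdd'
    refine ⟨prodPermHom Γ Δ (p₁, p₂),
      Subgroup.mem_map.mpr ⟨(p₁, p₂), Subgroup.mem_prod.mpr ⟨hp₁, hp₂⟩, rfl⟩, ?_⟩
    show (p₁ x, p₂ d) = (x', d')
    rw [hpx, hpd]
  · rintro ⟨k, hk, hkeq⟩
    obtain ⟨⟨p₁, p₂⟩, hp, rfl⟩ := Subgroup.mem_map.mp hk
    rw [Subgroup.mem_prod] at hp
    have hx' : p₁ x = x' := congrArg Prod.fst hkeq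
    have hd' : p₂ d = d' := congrArg Prod.snd hkeq
    have hτ' : ∀ e, r.r (x, e) (x', e) := (hAorb x x').mpr ⟨p₁, hp.1, hx'⟩
    have hσ' : ∀ y, r.r (y, d) (y, d') := (hBorb d d').mpr ⟨p₂, hp.2, hd'⟩
    exact r.iseqv.trans (hτ' d) (hσ' x')
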